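/- Let I ⊆ ℝ be an open interval and let x₀, x₁, x₂ : I → ℝ² be differentiable functions such that for each t ∈ I the points x₀(t), x₁(t), x₂(t) are affinely independent. Fix real constants c₀, c₁, c₂. For each t ∈ I let φ_t : ℝ² → ℝ be the unique affine map with φ_t(xⱼ(t)) = cⱼ for j = 0, 1, 2, and let Ẋ_t : ℝ² → ℝ² be the unique affine map with Ẋ_t(xⱼ(t)) = xⱼ'(t) for j = 0, 1, 2. Then for every fixed x ∈ ℝ², the function t ↦ φ_t(x) is differentiable on I and ∂φ_t(x)/∂t = −⟨∇φ_t, Ẋ_t(x)⟩, where ∇φ_t ∈ ℝ² is the (constant) gradient of the affine map φ_t. -/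

import Mathlib

open Real Set

/-- On an open interval `(a, b)`, let `x₀, x₁, x₂` be differentiable (with derivatives
`x'ⱼ`) and affinely independent vertex trajectories. For each `t`, let
`φ_t x = ⟪g t, x⟫ + b t` be the affine map with `φ_t (xⱼ t) = cⱼ` and let `Ẋ_t` be the
affine map with `Ẋ_t (xⱼ t) = x'ⱼ t`. Then for every fixed `x` the map `t ↦ φ_t x` is
differentiable with derivative `-⟪∇φ_t, Ẋ_t x⟫`, where `∇φ_t = g t`. -/
theorem basis_function_time_derivative
    (a b : ℝ)
    (x x' : Fin 3 → ℝ → EuclideanSpace ℝ (Fin 2))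
    (hx : ∀ j, ∀ t ∈ Ioo a b, HasDerivAt (x j) (x' j t) t)
    (hind : ∀ t ∈ Ioo a b, AffineIndependent ℝ (fun j => x j t))
    (c : Fin 3 → ℝ)
    (g : ℝ → EuclideanSpace ℝ (Fin 2)) (b₀ : ℝ → ℝ)
    (hφ : ∀ t ∈ Ioo a b, ∀ j, (inner ℝ (g t) (x j t) : ℝ) + b₀ t = c j)
    (W : ℝ → (EuclideanSpace ℝ (Fin 2) →ᵃ[ℝ] EuclideanSpace ℝ (Fin 2)))
    (hW : ∀ t ∈ Ioo a b, ∀ j, W t (x j t) = x' j t) :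
    ∀ p : EuclideanSpace ℝ (Fin 2), ∀ t ∈ Ioo a b,
      HasDerivAt (fun s => (inner ℝ (g s) p : ℝ) + b₀ s)
        (-(inner ℝ (g t) (W t p) : ℝ)) t := by
  intro p t ht
  -- coordinate-wise derivatives of the vertices
  have hXd : ∀ j (i : Fin 2), HasDerivAt (fun s => x j s i) (x' j t i) t := by
    intro j i
    have h := (EuclideanSpace.proj (𝕜 := ℝ) i).hasFDerivAt.comp_hasDerivAt t (hx j t ht)
    exact h
  have hXdiff : ∀ j (i : Fin 2), DifferentiableAt ℝ (fun s => x j s i) t := fun j i =>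
    (hXd j i).differentiableAt
  -- the scalar equations
  have hEq : ∀ s ∈ Ioo a b, ∀ j,
      x j s 0 * g s 0 + x j s 1 * g s 1 + b₀ s = c j := by
    intro s hs j
    have h := hφ s hs j
    simp only [PiLp.inner_apply, RCLike.inner_apply, RCLike.star_def, conj_trivial,
      Fin.sum_univ_two] at h
    linear_combination h
  -- the denominator (triangle determinant) and its nonvanishing
  set d : ℝ → ℝ := fun s =>
    x 0 s 0 * (x 1 s 1 - x 2 s 1) - x 0 s 1 * (x 1 s 0 - x 2 s 0)
      + (x 1 s 0 * x 2 s 1 - x 1 s 1 * x 2 s 0) with hd_def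
  have hd : ∀ s ∈ Ioo a b, d s ≠ 0 := by
    intro s hs h0
    set M : Matrix (Fin 3) (Fin 3) ℝ :=
      !![x 0 s 0, x 0 s 1, 1; x 1 s 0, x 1 s 1, 1; x 2 s 0, x 2 s 1, 1] with hM
    have hdet : M.det = 0 := by
      rw [hM, Matrix.det_fin_three]
      simp only [Matrix.cons_val', Matrix.cons_val_zero, Matrix.cons_val_one, Matrix.head_cons,
        Matrix.empty_val', Matrix.cons_val_fin_one, Matrix.head_fin_const, Matrix.cons_val_two,
        Matrix.tail_cons, Matrix.of_apply]
      linear_combination h0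
    obtain ⟨v, hv0, hv⟩ := Matrix.exists_vecMul_eq_zero_iff.mpr hdet
    have h2 : v 0 + v 1 + v 2 = 0 := by
      have := congrFun hv 2
      simpa [hM, Matrix.vecMul, dotProduct, Fin.sum_univ_three] using this
    have hsum : ∑ j : Fin 3, v j • x j s = (0 : EuclideanSpace ℝ (Fin 2)) := by
      ext i
      fin_cases i
      · have := congrFun hv 0
        simpa [hM, Matrix.vecMul, dotProduct, Fin.sum_univ_three] using this
      · have := congrFun hv 1
        simpa [hM, Matrix.vecMul, dotProduct, Fin.sum_univ_three] using this
    have hz : ∀ j ∈ Finset.univ, v j = 0 := by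
      refine (hind s hs).eq_zero_of_sum_eq_zero ?_ ?_
      · simpa [Fin.sum_univ_three] using h2
      · simpa using hsum
    exact hv0 (funext fun j => hz j (Finset.mem_univ j))
  -- Cramer's rule numerators
  set n0 : ℝ → ℝ := fun s =>
    (x 1 s 1 - x 2 s 1) * c 0 + (x 2 s 1 - x 0 s 1) * c 1 + (x 0 s 1 - x 1 s 1) * c 2 with hn0
  set n1 : ℝ → ℝ := fun s =>
    (x 2 s 0 - x 1 s 0) * c 0 + (x 0 s 0 - x 2 s 0) * c 1 + (x 1 s 0 - x 0 s 0) * c 2 with hn1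
  set n2 : ℝ → ℝ := fun s =>
    (x 1 s 0 * x 2 s 1 - x 1 s 1 * x 2 s 0) * c 0
      - (x 0 s 0 * x 2 s 1 - x 0 s 1 * x 2 s 0) * c 1
      + (x 0 s 0 * x 1 s 1 - x 0 s 1 * x 1 s 0) * c 2 with hn2
  have hc0 : ∀ s ∈ Ioo a b, d s * g s 0 = n0 s := by
    intro s hs
    linear_combination (x 1 s 1 - x 2 s 1) * hEq s hs 0 + (x 2 s 1 - x 0 s 1) * hEq s hs 1
      + (x 0 s 1 - x 1 s 1) * hEq s hs 2
  have hc1 : ∀ s ∈ Ioo a b, d s * g s 1 = n1 s := by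
    intro s hs
    linear_combination (x 2 s 0 - x 1 s 0) * hEq s hs 0 + (x 0 s 0 - x 2 s 0) * hEq s hs 1
      + (x 1 s 0 - x 0 s 0) * hEq s hs 2
  have hc2 : ∀ s ∈ Ioo a b, d s * b₀ s = n2 s := by
    intro s hs
    linear_combination (x 1 s 0 * x 2 s 1 - x 1 s 1 * x 2 s 0) * hEq s hs 0
      - (x 0 s 0 * x 2 s 1 - x 0 s 1 * x 2 s 0) * hEq s hs 1
      + (x 0 s 0 * x 1 s 1 - x 0 s 1 * x 1 s 0) * hEq s hs 2
  -- rational formulas for g and b₀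
  set G0 : ℝ → ℝ := fun s => n0 s / d s with hG0def
  set G1 : ℝ → ℝ := fun s => n1 s / d s with hG1def
  set G2 : ℝ → ℝ := fun s => n2 s / d s with hG2def
  have hg0 : ∀ s ∈ Ioo a b, G0 s = g s 0 := fun s hs => by
    rw [hG0def]; field_simp [hd s hs]; linear_combination - hc0 s hs
  have hg1 : ∀ s ∈ Ioo a b, G1 s = g s 1 := fun s hs => by
    rw [hG1def]; field_simp [hd s hs]; linear_combination - hc1 s hs
  have hg2 : ∀ s ∈ Ioo a b, G2 s = b₀ s := fun s hs => by
    rw [hG2def]; field_simp [hd s hs]; linear_combination - hc2 s hs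
  -- differentiability
  have hdd : DifferentiableAt ℝ d t := by
    have h00 := hXdiff 0 0; have h01 := hXdiff 0 1
    have h10 := hXdiff 1 0; have h11 := hXdiff 1 1
    have h20 := hXdiff 2 0; have h21 := hXdiff 2 1
    rw [hd_def]; fun_prop
  have hdne : d t ≠ 0 := hd t ht
  have hG0d : DifferentiableAt ℝ G0 t := by
    have h00 := hXdiff 0 0; have h01 := hXdiff 0 1
    have h10 := hXdiff 1 0; have h11 := hXdiff 1 1
    have h20 := hXdiff 2 0; have h21 := hXdiff 2 1
    rw [hG0def, hn0]; exact DifferentiableAt.div (by fun_prop) hdd hdne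
  have hG1d : DifferentiableAt ℝ G1 t := by
    have h00 := hXdiff 0 0; have h01 := hXdiff 0 1
    have h10 := hXdiff 1 0; have h11 := hXdiff 1 1
    have h20 := hXdiff 2 0; have h21 := hXdiff 2 1
    rw [hG1def, hn1]; exact DifferentiableAt.div (by fun_prop) hdd hdne
  have hG2d : DifferentiableAt ℝ G2 t := by
    have h00 := hXdiff 0 0; have h01 := hXdiff 0 1
    have h10 := hXdiff 1 0; have h11 := hXdiff 1 1
    have h20 := hXdiff 2 0; have h21 := hXdiff 2 1
    rw [hG2def, hn2]; exact DifferentiableAt.div (by fun_prop) hdd hdne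
  set γ0 := deriv G0 t with hγ0
  set γ1 := deriv G1 t with hγ1
  set γ2 := deriv G2 t with hγ2
  have hmem : Ioo a b ∈ nhds t := isOpen_Ioo.mem_nhds ht
  -- the key vertex identities
  have key : ∀ j, γ0 * x j t 0 + γ1 * x j t 1 + γ2
      = -(g t 0 * x' j t 0 + g t 1 * x' j t 1) := by
    intro j
    have hD : HasDerivAt (fun s => G0 s * x j s 0 + G1 s * x j s 1 + G2 s)
        ((γ0 * x j t 0 + G0 t * x' j t 0) + (γ1 * x j t 1 + G1 t * x' j t 1) + γ2) t :=
      ((hG0d.hasDerivAt.mul (hXd j 0)).add (hG1d.hasDerivAt.mul (hXd j 1))).add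
        hG2d.hasDerivAt
    have heq : (fun s => G0 s * x j s 0 + G1 s * x j s 1 + G2 s)
        =ᶠ[nhds t] fun _ => c j := by
      filter_upwards [hmem] with s hs
      rw [hg0 s hs, hg1 s hs, hg2 s hs]
      linear_combination hEq s hs j
    have hD' : HasDerivAt (fun _ : ℝ => c j)
        ((γ0 * x j t 0 + G0 t * x' j t 0) + (γ1 * x j t 1 + G1 t * x' j t 1) + γ2) t :=
      hD.congr_of_eventuallyEq heq.symm
    have h0 : ((γ0 * x j t 0 + G0 t * x' j t 0) + (γ1 * x j t 1 + G1 t * x' j t 1) + γ2)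
        = 0 := hD'.unique (hasDerivAt_const t (c j))
    rw [hg0 t ht, hg1 t ht] at h0
    linarith [h0]
  -- derivative of the goal function with abstract value
  have hDf : HasDerivAt (fun s => (inner ℝ (g s) p : ℝ) + b₀ s)
      (γ0 * p 0 + γ1 * p 1 + γ2) t := by
    have hD : HasDerivAt (fun s => G0 s * p 0 + G1 s * p 1 + G2 s)
        ((γ0 * p 0 + G0 t * 0) + (γ1 * p 1 + G1 t * 0) + γ2) t :=
      ((hG0d.hasDerivAt.mul (hasDerivAt_const t (p 0))).add
        (hG1d.hasDerivAt.mul (hasDerivAt_const t (p 1)))).add hG2d.hasDerivAt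
    have heq : (fun s => G0 s * p 0 + G1 s * p 1 + G2 s)
        =ᶠ[nhds t] fun s => (inner ℝ (g s) p : ℝ) + b₀ s := by
      filter_upwards [hmem] with s hs
      rw [hg0 s hs, hg1 s hs, hg2 s hs]
      simp only [PiLp.inner_apply, RCLike.inner_apply, RCLike.star_def, conj_trivial,
        Fin.sum_univ_two]
      try ring
    have := hD.congr_of_eventuallyEq heq.symm
    simpa using this
  -- now identify the derivative value via an affine-map argument
  have hval : γ0 * p 0 + γ1 * p 1 + γ2 = -(inner ℝ (g t) (W t p) : ℝ) := by
    -- two affine maps agreeing on an affine basis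
    set L : EuclideanSpace ℝ (Fin 2) →ₗ[ℝ] ℝ :=
      γ0 • (EuclideanSpace.proj (0 : Fin 2) : EuclideanSpace ℝ (Fin 2) →L[ℝ] ℝ).toLinearMap
        + γ1 • (EuclideanSpace.proj (1 : Fin 2) :
            EuclideanSpace ℝ (Fin 2) →L[ℝ] ℝ).toLinearMap with hL
    set A : EuclideanSpace ℝ (Fin 2) →ᵃ[ℝ] ℝ :=
      { toFun := fun q => γ0 * q 0 + γ1 * q 1 + γ2
        linear := L
        map_vadd' := by
          intro q v
          simp only [hL, LinearMap.add_apply, LinearMap.smul_apply,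
            ContinuousLinearMap.coe_coe, PiLp.proj_apply, vadd_eq_add, PiLp.add_apply,
            smul_eq_mul]
          ring } with hA
    set B : EuclideanSpace ℝ (Fin 2) →ᵃ[ℝ] ℝ :=
      ((-(innerSL ℝ (g t)).toLinearMap).toAffineMap).comp (W t) with hB
    have hBapp : ∀ q, B q = -(inner ℝ (g t) (W t q) : ℝ) := by
      intro q; simp [hB]
    have hvert : ∀ j, A (x j t) = B (x j t) := by
      intro j
      have := key j
      rw [hBapp, hW t ht j]
      simp only [hA, AffineMap.coe_mk]
      rw [this]
      simp [PiLp.inner_apply, RCLike.inner_apply, Fin.sum_univ_two]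
      try ring
    -- affine basis
    have htot : affineSpan ℝ (Set.range fun j => x j t) = ⊤ := by
      rw [(hind t ht).affineSpan_eq_top_iff_card_eq_finrank_add_one]
      simp [finrank_euclideanSpace_fin]
    set bb : AffineBasis (Fin 3) ℝ (EuclideanSpace ℝ (Fin 2)) :=
      ⟨fun j => x j t, hind t ht, htot⟩ with hbb
    have hw1 : ∑ j : Fin 3, bb.coord j p = 1 := bb.sum_coord_apply_eq_one p
    have hcomb : (Finset.univ.affineCombination ℝ bb fun j => bb.coord j p) = p :=
      bb.affineCombination_coord_eq_self p
    have hAB : A p = B p := by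
      rw [← hcomb, Finset.map_affineCombination _ _ _ (by simpa using hw1),
        Finset.map_affineCombination _ _ _ (by simpa using hw1)]
      have hfun : (⇑A ∘ ⇑bb) = (⇑B ∘ ⇑bb) := funext fun j => hvert j
      rw [hfun]
    have hAp : A p = γ0 * p 0 + γ1 * p 1 + γ2 := rfl
    rw [← hAp, hAB, hBapp]
  rw [← hval]
  exact hDf
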